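/- Let x, y ∈ ℂ^{n+1} be nonzero vectors each satisfying the defining equations of S. Then x_1^k·y_0^k = y_1^k·x_0^k if and only if there exist μ ∈ ℂ with μ ≠ 0 and ζ_0, …, ζ_n ∈ ℂ with ζ_j^k = 1 for every j, such that y_j = μ·ζ_j·x_j for all j = 0, …, n. (That is, each fiber of the morphism S → ℙ¹, [x_0 : ⋯ : x_n] ↦ [−x_1^k : x_0^k], is exactly one orbit of the generalized Fermat group H ≅ (ℤ/kℤ)^n generated by the coordinate-wise multiplications by k-th roots of unity.) -/

import Mathlib

open Fin.NatCast in
/-- A nonzero vector `x ∈ ℂ^{n+1}` satisfies the defining equations of the generalized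
Fermat curve of type `(k,n)`: `lam i * x₀^k + x₁^k + x_{i+2}^k = 0` for `0 ≤ i ≤ n - 2`
(with `lam 0 = 1`). -/
def fermatEqns (n k : ℕ) (lam : ℕ → ℂ) (x : Fin (n + 1) → ℂ) : Prop :=
  ∀ i : ℕ, i ≤ n - 2 → lam i * x 0 ^ k + x 1 ^ k + x ((i + 2 : ℕ) : Fin (n + 1)) ^ k = 0

/-- two nonzero solutions of the defining equations of the generalized
Fermat curve `S` of type `(k,n)` lie in the same fiber of `S → ℙ¹`,
`[x₀ : ⋯ : xₙ] ↦ [-x₁^k : x₀^k]` (i.e. `x₁^k y₀^k = y₁^k x₀^k`) iff they differ by a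
global scalar times coordinate-wise multiplication by `k`-th roots of unity, i.e. lie in
the same orbit of the generalized Fermat group `H ≅ (ℤ/kℤ)ⁿ`. -/
theorem stmt_14 (k n : ℕ) (hk : 2 ≤ k) (hn : 2 ≤ n)
    (lam : ℕ → ℂ) (hlam0 : lam 0 = 1)
    (hlam_ne0 : ∀ i, 1 ≤ i → i ≤ n - 2 → lam i ≠ 0)
    (hlam_ne1 : ∀ i, 1 ≤ i → i ≤ n - 2 → lam i ≠ 1)
    (hlam_inj : ∀ i j, i ≤ n - 2 → j ≤ n - 2 → lam i = lam j → i = j)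
    (x y : Fin (n + 1) → ℂ) (hx : x ≠ 0) (hy : y ≠ 0)
    (hex : fermatEqns n k lam x) (hey : fermatEqns n k lam y) :
    x 1 ^ k * y 0 ^ k = y 1 ^ k * x 0 ^ k ↔
      ∃ μ : ℂ, μ ≠ 0 ∧ ∃ ζ : Fin (n + 1) → ℂ,
        (∀ j, ζ j ^ k = 1) ∧ ∀ j, y j = μ * ζ j * x j := by
  have hk0 : k ≠ 0 := by omega
  -- for any solution z, the "high" coordinates are determined by z 0, z 1
  have key : ∀ z : Fin (n+1) → ℂ, fermatEqns n k lam z →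
      ∀ j : Fin (n+1), 2 ≤ (j : ℕ) →
        z j ^ k = - (lam ((j:ℕ) - 2) * z 0 ^ k) - z 1 ^ k := by
    intro z hez j hj
    have hjn : (j : ℕ) < n + 1 := j.isLt
    have hi : (j:ℕ) - 2 ≤ n - 2 := by omega
    have heq := hez ((j:ℕ) - 2) hi
    have hcast : (open Fin.NatCast in (((j:ℕ) - 2 + 2 : ℕ) : Fin (n+1))) = j := by
      apply Fin.ext
      rw [Fin.val_cast_of_lt (by omega)]
      omega
    rw [hcast] at heq
    linear_combination heq
  -- a nonzero solution can't have both first coordinates zero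
  have pairne : ∀ z : Fin (n+1) → ℂ, z ≠ 0 → fermatEqns n k lam z →
      z 0 = 0 → z 1 = 0 → False := by
    intro z hz hez h0 h1
    apply hz
    funext j
    show z j = 0
    by_cases hj : 2 ≤ (j:ℕ)
    · have hzk := key z hez j hj
      rw [h0, h1] at hzk
      simp [zero_pow hk0] at hzk
      exact hzk.1
    · have hv : (j:ℕ) = 0 ∨ (j:ℕ) = 1 := by omega
      rcases hv with hv | hv
      · have : j = 0 := by apply Fin.ext; simp [hv]
        rw [this]; exact h0
      · have : j = 1 := by
          apply Fin.ext; rw [Fin.val_one', Nat.mod_eq_of_lt (by omega)]; omega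
        rw [this]; exact h1
  constructor
  · intro h
    -- in both cases we produce μ ≠ 0 with y j ^ k = μ^k * x j ^ k for j = 0, 1
    have main : ∃ μ : ℂ, μ ≠ 0 ∧ y 0 ^ k = μ ^ k * x 0 ^ k ∧ y 1 ^ k = μ ^ k * x 1 ^ k := by
      by_cases hx0 : x 0 = 0
      · have hx1 : x 1 ≠ 0 := fun h1 => pairne x hx hex hx0 h1
        have hy0 : y 0 = 0 := by
          have h' : x 1 ^ k * y 0 ^ k = 0 := by rw [h, hx0, zero_pow hk0, mul_zero]
          have := (mul_eq_zero.mp h').resolve_left (pow_ne_zero k hx1)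
          exact pow_eq_zero_iff hk0 |>.mp this
        have hy1 : y 1 ≠ 0 := fun h1 => pairne y hy hey hy0 h1
        refine ⟨y 1 / x 1, div_ne_zero hy1 hx1, ?_, ?_⟩
        · rw [hx0, hy0, zero_pow hk0, mul_zero]
        · rw [div_pow, div_mul_eq_mul_div, eq_div_iff (pow_ne_zero k hx1)]
      · have hy0 : y 0 ≠ 0 := by
          intro h0
          have h' : y 1 ^ k * x 0 ^ k = 0 := by rw [← h, h0, zero_pow hk0, mul_zero]
          have := (mul_eq_zero.mp h').resolve_right (pow_ne_zero k hx0)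
          exact pairne y hy hey h0 (pow_eq_zero_iff hk0 |>.mp this)
        refine ⟨y 0 / x 0, div_ne_zero hy0 hx0, ?_, ?_⟩
        · rw [div_pow, div_mul_eq_mul_div, eq_div_iff (pow_ne_zero k hx0)]
        · rw [div_pow, div_mul_eq_mul_div, eq_div_iff (pow_ne_zero k hx0)]
          linear_combination -h
    obtain ⟨μ, hμ, h0, h1⟩ := main
    have hall : ∀ j : Fin (n+1), y j ^ k = μ ^ k * x j ^ k := by
      intro j
      by_cases hj : 2 ≤ (j:ℕ)
      · rw [key x hex j hj, key y hey j hj, h0, h1]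
        ring
      · have hv : (j:ℕ) = 0 ∨ (j:ℕ) = 1 := by omega
        rcases hv with hv | hv
        · have hj0 : j = 0 := by apply Fin.ext; simp [hv]
          rw [hj0]; exact h0
        · have hj1 : j = 1 := by
            apply Fin.ext; rw [Fin.val_one', Nat.mod_eq_of_lt (by omega)]; omega
          rw [hj1]; exact h1
    refine ⟨μ, hμ, fun j => if x j = 0 then 1 else y j / (μ * x j), fun j => ?_, fun j => ?_⟩
    · by_cases hxj : x j = 0
      · simp [hxj]
      · simp only [hxj, if_false]
        rw [div_pow, hall j, mul_pow]
        exact div_self (mul_ne_zero (pow_ne_zero k hμ) (pow_ne_zero k hxj))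
    · by_cases hxj : x j = 0
      · simp only [hxj, if_pos, mul_zero]
        have : y j ^ k = 0 := by rw [hall j, hxj, zero_pow hk0, mul_zero]
        exact pow_eq_zero_iff hk0 |>.mp this
      · simp only [hxj, if_false]
        field_simp
  · rintro ⟨μ, hμ, ζ, hζ, hyx⟩
    rw [hyx 0, hyx 1, mul_pow, mul_pow, mul_pow, mul_pow, hζ 0, hζ 1]
    ring
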